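/- The squared hinge loss F(x) = ∑ᵢ max(0, aᵢᵀx − yᵢ)² is optimally strongly convex: there exists l > 0 such that F(x) − F(P_S(x)) ≥ (l/2)‖x − P_S(x)‖² for all x, where S is the (assumed nonempty) set of minimizers of F. -/

import Mathlib

open Finset

variable {H : Type*} [NormedAddCommGroup H] [InnerProductSpace ℝ H]

/-- The finitely generated cone over `a '' s`. -/
def coneS {ι : Type*} [Fintype ι] (a : ι → H) (s : Finset ι) : Set H :=
  {x | ∃ l : ι → ℝ, (∀ i, 0 ≤ l i) ∧ x = ∑ i ∈ s, l i • a i}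

theorem cone_carath {ι : Type*} [Fintype ι] [DecidableEq ι] (a : ι → H) (s : Finset ι) :
    ∀ x ∈ coneS a s, ∃ t ⊆ s,
      LinearIndependent ℝ (fun i : ↥t => a i) ∧ x ∈ coneS a t := by
  classical
  induction s using Finset.strongInduction with
  | _ s ih =>
  intro x hx
  by_cases hli : LinearIndependent ℝ (fun i : ↥s => a i)
  · exact ⟨s, Finset.Subset.refl _, hli, hx⟩
  · obtain ⟨l, hl0, hlx⟩ := hx
    rw [Fintype.not_linearIndependent_iff] at hli
    obtain ⟨g, hg0, ⟨j₀, hj₀⟩⟩ := hli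
    -- build a sign-adjusted coefficient vector c on ι with a positive entry in s
    have key : ∃ c : ι → ℝ, (∑ i ∈ s, c i • a i = 0) ∧ ∃ j ∈ s, 0 < c j := by
      set cc : ι → ℝ := fun i => if h : i ∈ s then g ⟨i, h⟩ else 0 with hcc
      have hsum : ∑ i ∈ s, cc i • a i = 0 := by
        rw [← Finset.sum_coe_sort s (fun i => cc i • a i)]
        rw [← hg0]
        apply Finset.sum_congr rfl
        intro i _
        simp [hcc, i.2]
      rcases lt_or_gt_of_ne hj₀ with h | h
      · refine ⟨-cc, ?_, ⟨j₀, j₀.2, ?_⟩⟩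
        · simp only [Pi.neg_apply, neg_smul, Finset.sum_neg_distrib, hsum, neg_zero]
        · simp only [Pi.neg_apply, hcc, dif_pos j₀.2, Subtype.coe_eta]
          linarith
      · refine ⟨cc, hsum, ⟨j₀, j₀.2, ?_⟩⟩
        simp only [hcc, dif_pos j₀.2, Subtype.coe_eta]
        exact h
    obtain ⟨c, hcsum, j, hjs, hjc⟩ := key
    set T : Finset ι := s.filter (fun i => 0 < c i) with hT
    have hTne : T.Nonempty := ⟨j, by simp [hT, hjs, hjc]⟩
    have hTs : T ⊆ s := Finset.filter_subset _ _
    set θ : ℝ := T.inf' hTne (fun i => l i / c i) with hθ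
    have hθ0 : 0 ≤ θ := by
      apply Finset.le_inf'
      intro i hi
      rw [hT, Finset.mem_filter] at hi
      exact div_nonneg (hl0 i) (le_of_lt hi.2)
    obtain ⟨i₁, hi₁T, hi₁⟩ := Finset.exists_mem_eq_inf' hTne (fun i => l i / c i)
    have hi₁c : 0 < c i₁ := (Finset.mem_filter.mp hi₁T).2
    set l' : ι → ℝ := fun i => if i ∈ s then l i - θ * c i else 0 with hl'
    have hl'0 : ∀ i, 0 ≤ l' i := by
      intro i
      rw [hl']
      by_cases his : i ∈ s
      · simp only [his, if_true]
        by_cases hic : 0 < c i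
        · have : θ ≤ l i / c i := Finset.inf'_le _ (by simp [hT, his, hic])
          have := (le_div_iff₀ hic).mp this
          linarith
        · push_neg at hic
          nlinarith [hl0 i]
      · simp [his]
    have hl'i₁ : l' i₁ = 0 := by
      simp only [hl', if_pos (hTs hi₁T), hθ, hi₁]
      field_simp
      ring
    have hxl' : x = ∑ i ∈ s, l' i • a i := by
      have : ∑ i ∈ s, l' i • a i = ∑ i ∈ s, (l i • a i - θ • (c i • a i)) := by
        apply Finset.sum_congr rfl
        intro i hi
        simp only [hl', if_pos hi]
        rw [sub_smul, smul_smul]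
      rw [this, Finset.sum_sub_distrib, ← Finset.smul_sum, hcsum, smul_zero, sub_zero, hlx]
    have hxe : x ∈ coneS a (s.erase i₁) := by
      refine ⟨l', hl'0, ?_⟩
      rw [hxl', Finset.sum_erase _ (by rw [hl'i₁, zero_smul])]
    obtain ⟨t, hts, hind, hxt⟩ := ih (s.erase i₁) (Finset.erase_ssubset (hTs hi₁T)) x hxe
    exact ⟨t, hts.trans (Finset.erase_subset _ _), hind, hxt⟩


/-- the summation linear map -/
noncomputable def Lmap {ι : Type*} [Fintype ι] (a : ι → H) (t : Finset ι) :
    (↥t → ℝ) →ₗ[ℝ] H where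
  toFun := fun μ => ∑ i : ↥t, μ i • a ↑i
  map_add' := by
    intro μ ν
    simp [add_smul, Finset.sum_add_distrib]
  map_smul' := by
    intro r μ
    simp [smul_smul, Finset.smul_sum]

theorem Lmap_inj {ι : Type*} [Fintype ι] (a : ι → H) (t : Finset ι)
    (h : LinearIndependent ℝ (fun i : ↥t => a i)) : LinearMap.ker (Lmap a t) = ⊥ := by
  rw [LinearMap.ker_eq_bot']
  intro μ hμ
  rw [Fintype.linearIndependent_iff] at h
  funext i
  exact h μ hμ i

theorem coneS_eq_image {ι : Type*} [Fintype ι] [DecidableEq ι] (a : ι → H) (t : Finset ι) :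
    coneS a t = (Lmap a t) '' {μ : ↥t → ℝ | ∀ i, 0 ≤ μ i} := by
  ext x
  constructor
  · rintro ⟨l, hl0, rfl⟩
    refine ⟨fun i => l i, fun i => hl0 i, ?_⟩
    show ∑ i : ↥t, l ↑i • a ↑i = _
    rw [Finset.sum_coe_sort t (fun i => l i • a i)]
  · rintro ⟨μ, hμ0, rfl⟩
    refine ⟨fun i => if h : i ∈ t then μ ⟨i, h⟩ else 0, ?_, ?_⟩
    · intro i
      by_cases h : i ∈ t
      · simp only [dif_pos h]; exact hμ0 _
      · simp [h]
    · show _ = ∑ i ∈ t, (if h : i ∈ t then μ ⟨i, h⟩ else 0) • a i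
      rw [← Finset.sum_coe_sort t (fun i => (if h : i ∈ t then μ ⟨i, h⟩ else 0) • a i)]
      show (Lmap a t) μ = _
      apply Finset.sum_congr rfl
      intro i _
      simp [i.2]

theorem coneS_mono {ι : Type*} [Fintype ι] [DecidableEq ι] (a : ι → H) {t s : Finset ι}
    (hts : t ⊆ s) : coneS a t ⊆ coneS a s := by
  rintro x ⟨l, hl0, rfl⟩
  refine ⟨fun i => if i ∈ t then l i else 0, ?_, ?_⟩
  · intro i; by_cases h : i ∈ t <;> simp [h, hl0 i]
  · rw [← Finset.sum_subset hts]
    · apply Finset.sum_congr rfl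
      intro i hi
      simp [hi]
    · intro i _ hit
      simp [hit]

theorem coneS_closed [FiniteDimensional ℝ H] {ι : Type*} [Fintype ι] [DecidableEq ι]
    (a : ι → H) (s : Finset ι) : IsClosed (coneS a s) := by
  classical
  have heq : coneS a s =
      ⋃ t ∈ (s.powerset.filter (fun t => LinearIndependent ℝ (fun i : {x // x ∈ t} => a i.1))),
        coneS a t := by
    ext x
    simp only [Set.mem_iUnion, Finset.mem_filter, Finset.mem_powerset, exists_prop]
    constructor
    · intro hx
      obtain ⟨t, hts, hind, hxt⟩ := cone_carath a s x hx
      exact ⟨t, ⟨hts, hind⟩, hxt⟩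
    · rintro ⟨t, ⟨hts, _⟩, hxt⟩
      exact coneS_mono a hts hxt
  rw [heq]
  apply Set.Finite.isClosed_biUnion (Finset.finite_toSet _)
  intro t ht
  rw [Finset.mem_coe, Finset.mem_filter] at ht
  rw [coneS_eq_image]
  have hker := Lmap_inj a t ht.2
  have hemb := LinearMap.isClosedEmbedding_of_injective (𝕜 := ℝ) (f := Lmap a t) hker
  apply hemb.isClosedMap
  have : {μ : ↥t → ℝ | ∀ i, 0 ≤ μ i} = ⋂ i : ↥t, {μ : ↥t → ℝ | 0 ≤ μ i} := by
    ext μ; simp [Set.mem_iInter]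
  rw [this]
  apply isClosed_iInter
  intro i
  exact isClosed_le continuous_const (continuous_apply i)


theorem mult_bound [FiniteDimensional ℝ H] {ι : Type*} [Fintype ι] (a : ι → H) (t : Finset ι)
    (h : LinearIndependent ℝ (fun i : ↥t => a i)) :
    ∃ D : ℝ, 0 < D ∧ ∀ μ : ↥t → ℝ, ∑ i : ↥t, (μ i) ^ 2 ≤ D * ‖Lmap a t μ‖ ^ 2 := by
  have hker := Lmap_inj a t h
  have hinj : Function.Injective (Lmap a t) := LinearMap.ker_eq_bot.mp hker
  set e := LinearEquiv.ofInjective (Lmap a t) hinj with he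
  set g := LinearMap.toContinuousLinearMap (e.symm.toLinearMap) with hg
  have hbound : ∀ μ : ↥t → ℝ, ‖μ‖ ≤ ‖g‖ * ‖Lmap a t μ‖ := by
    intro μ
    have h1 : μ = g (e μ) := by
      simp [hg, LinearMap.coe_toContinuousLinearMap']
    calc ‖μ‖ = ‖g (e μ)‖ := by rw [← h1]
    _ ≤ ‖g‖ * ‖e μ‖ := g.le_opNorm _
    _ = ‖g‖ * ‖Lmap a t μ‖ := by
        rw [Submodule.coe_norm, he]
        rfl
  refine ⟨(Fintype.card ↥t : ℝ) * ‖g‖ ^ 2 + 1, by positivity, ?_⟩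
  intro μ
  have h2 : ∀ i : ↥t, (μ i) ^ 2 ≤ ‖μ‖ ^ 2 := by
    intro i
    have := norm_le_pi_norm μ i
    have h3 : |μ i| ≤ ‖μ‖ := this
    nlinarith [abs_nonneg (μ i), sq_abs (μ i)]
  calc ∑ i : ↥t, (μ i) ^ 2 ≤ ∑ _i : ↥t, ‖μ‖ ^ 2 := Finset.sum_le_sum (fun i _ => h2 i)
  _ = (Fintype.card ↥t : ℝ) * ‖μ‖ ^ 2 := by rw [Finset.sum_const]; simp [mul_comm]
  _ ≤ (Fintype.card ↥t : ℝ) * (‖g‖ * ‖Lmap a t μ‖) ^ 2 := by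
      apply mul_le_mul_of_nonneg_left _ (by positivity)
      have := hbound μ
      nlinarith [norm_nonneg μ, norm_nonneg (Lmap a t μ), norm_nonneg g]
  _ ≤ ((Fintype.card ↥t : ℝ) * ‖g‖ ^ 2 + 1) * ‖Lmap a t μ‖ ^ 2 := by
      have : 0 ≤ ‖Lmap a t μ‖ ^ 2 := by positivity
      nlinarith [Nat.cast_nonneg (α := ℝ) (Fintype.card ↥t), norm_nonneg g]

open scoped InnerProductSpace in
theorem farkas [FiniteDimensional ℝ H] {ι : Type*} [Fintype ι] [DecidableEq ι]
    (a : ι → H) (b : ι → ℝ) (p : H) (hp : ∀ i, ⟪a i, p⟫_ℝ ≤ b i) (v : H)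
    (hv : ∀ z : H, (∀ i, ⟪a i, z⟫_ℝ ≤ b i) → ⟪v, z - p⟫_ℝ ≤ 0) :
    v ∈ coneS a (Finset.univ.filter fun i => ⟪a i, p⟫_ℝ = b i) := by
  classical
  by_contra hvc
  set I := Finset.univ.filter (fun i => ⟪a i, p⟫_ℝ = b i) with hI
  set K : ConvexCone ℝ H :=
    { carrier := coneS a I
      smul_mem' := by
        rintro c hc x ⟨l, hl0, rfl⟩
        exact ⟨fun i => c * l i, fun i => mul_nonneg hc.le (hl0 i),
          by rw [Finset.smul_sum]; exact Finset.sum_congr rfl (fun i _ => by simp [smul_smul])⟩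
      add_mem' := by
        rintro x ⟨l, hl0, rfl⟩ z ⟨l', hl'0, rfl⟩
        exact ⟨fun i => l i + l' i, fun i => add_nonneg (hl0 i) (hl'0 i),
          by rw [← Finset.sum_add_distrib]; exact Finset.sum_congr rfl (fun i _ => by simp [add_smul])⟩ } with hK
  have hKne : (K : Set H).Nonempty := ⟨0, ⟨fun _ => 0, fun _ => le_refl 0, by simp⟩⟩
  have hKcl : IsClosed (K : Set H) := coneS_closed a I
  have hKpt : K.Pointed := ⟨fun _ => 0, fun _ => le_refl 0, by simp⟩
  obtain ⟨yy, h1, h2⟩ :=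
    ProperCone.hyperplane_separation'
      { toSubmodule := K.toPointedCone hKpt, isClosed' := hKcl } hvc
  have hay : ∀ i ∈ I, 0 ≤ ⟪a i, yy⟫_ℝ := by
    intro i hiI
    apply h1
    refine ⟨fun j => if j = i then 1 else 0, fun j => by positivity, ?_⟩
    rw [Finset.sum_eq_single_of_mem i hiI]
    · simp
    · intro j _ hji; simp [hji]
  have hev : ∀ᶠ ε in nhdsWithin (0:ℝ) (Set.Ioi 0), ∀ i, ⟪a i, p - ε • yy⟫_ℝ ≤ b i := by
    rw [Filter.eventually_all]
    intro i
    by_cases hact : ⟪a i, p⟫_ℝ = b i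
    · filter_upwards [self_mem_nhdsWithin] with ε hε
      rw [inner_sub_right, real_inner_smul_right]
      have h0 : 0 ≤ ⟪a i, yy⟫_ℝ := hay i (by simp [hI, hact])
      have : (0:ℝ) < ε := hε
      nlinarith [hp i]
    · have hlt : ⟪a i, p⟫_ℝ < b i := lt_of_le_of_ne (hp i) hact
      have hcont : Continuous (fun ε : ℝ => ⟪a i, p - ε • yy⟫_ℝ) := by
        apply Continuous.inner continuous_const
        exact continuous_const.sub (continuous_id.smul continuous_const)
      have : ∀ᶠ ε in nhds (0:ℝ), ⟪a i, p - ε • yy⟫_ℝ < b i := by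
        have h0 : ⟪a i, p - (0:ℝ) • yy⟫_ℝ < b i := by simpa using hlt
        exact hcont.continuousAt.eventually_lt continuousAt_const h0
      exact (this.filter_mono nhdsWithin_le_nhds).mono (fun ε h => h.le)
  obtain ⟨ε, hfeas, hεpos⟩ := (hev.and self_mem_nhdsWithin).exists
  have hεpos : (0:ℝ) < ε := hεpos
  have := hv (p - ε • yy) hfeas
  rw [sub_sub_cancel_left, inner_neg_right, real_inner_smul_right] at this
  have hvy : ⟪yy, v⟫_ℝ = ⟪v, yy⟫_ℝ := real_inner_comm _ _
  nlinarith


open scoped InnerProductSpace in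
theorem hoffman [FiniteDimensional ℝ H] {ι : Type*} [Fintype ι] [DecidableEq ι]
    (a : ι → H) (b : ι → ℝ) (hne : ∃ z : H, ∀ i, ⟪a i, z⟫_ℝ ≤ b i) :
    ∃ C : ℝ, 0 < C ∧ ∀ x : H, ∃ p : H, (∀ i, ⟪a i, p⟫_ℝ ≤ b i) ∧
      ‖x - p‖ ^ 2 ≤ C * ∑ i, (max 0 (⟪a i, x⟫_ℝ - b i)) ^ 2 := by
  classical
  -- the uniform constant
  have hD : ∀ t : Finset ι, ∃ D : ℝ, 0 < D ∧
      (LinearIndependent ℝ (fun i : ↥t => a i) →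
        ∀ μ : ↥t → ℝ, ∑ i : ↥t, (μ i) ^ 2 ≤ D * ‖Lmap a t μ‖ ^ 2) := by
    intro t
    by_cases h : LinearIndependent ℝ (fun i : ↥t => a i)
    · obtain ⟨D, hD0, hDb⟩ := mult_bound a t h
      exact ⟨D, hD0, fun _ => hDb⟩
    · exact ⟨1, one_pos, fun h' => absurd h' h⟩
  choose D hD0 hDb using hD
  set C : ℝ := 1 + ∑ t ∈ (Finset.univ : Finset ι).powerset, D t with hC
  have hCpos : 0 < C := by
    rw [hC]
    have : 0 ≤ ∑ t ∈ (Finset.univ : Finset ι).powerset, D t :=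
      Finset.sum_nonneg (fun t _ => (hD0 t).le)
    linarith
  have hDC : ∀ t : Finset ι, D t ≤ C := by
    intro t
    rw [hC]
    have h1 : D t ≤ ∑ t' ∈ (Finset.univ : Finset ι).powerset, D t' :=
      Finset.single_le_sum (fun t' _ => (hD0 t').le) (by simp)
    linarith
  refine ⟨C, hCpos, ?_⟩
  intro x
  -- the polyhedron and the projection
  set P : Set H := {z | ∀ i, ⟪a i, z⟫_ℝ ≤ b i} with hP
  have hPcl : IsClosed P := by
    have : P = ⋂ i, {z : H | ⟪a i, z⟫_ℝ ≤ b i} := by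
      ext z; simp [hP, Set.mem_iInter]
    rw [this]
    exact isClosed_iInter (fun i =>
      isClosed_le (Continuous.inner continuous_const continuous_id) continuous_const)
  have hPconv : Convex ℝ P := by
    intro z hz w hw α β hα hβ hαβ
    intro i
    have hz' := hz i
    have hw' := hw i
    rw [inner_add_right, real_inner_smul_right, real_inner_smul_right]
    calc α * ⟪a i, z⟫_ℝ + β * ⟪a i, w⟫_ℝ ≤ α * b i + β * b i := by
          apply add_le_add (mul_le_mul_of_nonneg_left hz' hα) (mul_le_mul_of_nonneg_left hw' hβ)
    _ = b i := by rw [← add_mul, hαβ, one_mul]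
  obtain ⟨p, hpP, hpinf⟩ :=
    exists_norm_eq_iInf_of_complete_convex hne hPcl.isComplete hPconv x
  have hchar := (norm_eq_iInf_iff_real_inner_le_zero hPconv hpP).1 hpinf
  set v : H := x - p with hvdef
  have hfark : v ∈ coneS a (Finset.univ.filter fun i => ⟪a i, p⟫_ℝ = b i) :=
    farkas a b p hpP v (fun z hz => hchar z hz)
  obtain ⟨t, htI, htind, l, hl0, hveq⟩ := cone_carath a _ v hfark
  refine ⟨p, hpP, ?_⟩
  set R : ι → ℝ := fun i => max 0 (⟪a i, x⟫_ℝ - b i) with hR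
  have hR0 : ∀ i, 0 ≤ R i := fun i => le_max_left _ _
  -- main computation
  have hmain : ‖v‖ ^ 2 ≤ ∑ i ∈ t, l i * R i := by
    have h1 : ‖v‖ ^ 2 = ∑ i ∈ t, l i * ⟪a i, v⟫_ℝ := by
      rw [← real_inner_self_eq_norm_sq]
      nth_rewrite 1 [hveq]
      rw [sum_inner]
      exact Finset.sum_congr rfl (fun i _ => real_inner_smul_left _ _ _)
    rw [h1]
    apply Finset.sum_le_sum
    intro i hit
    have hact : ⟪a i, p⟫_ℝ = b i := (Finset.mem_filter.mp (htI hit)).2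
    have h2 : ⟪a i, v⟫_ℝ = ⟪a i, x⟫_ℝ - b i := by
      rw [hvdef, inner_sub_right, hact]
    rw [h2]
    exact mul_le_mul_of_nonneg_left (le_max_right _ _) (hl0 i)
  -- Cauchy–Schwarz and the multiplier bound
  have hCS : (∑ i ∈ t, l i * R i) ^ 2 ≤ (∑ i ∈ t, l i ^ 2) * ∑ i ∈ t, R i ^ 2 :=
    Finset.sum_mul_sq_le_sq_mul_sq t l R
  have hLv : Lmap a t (fun i => l i) = v := by
    show ∑ i : ↥t, l ↑i • a ↑i = v
    rw [Finset.sum_coe_sort t (fun i => l i • a i)]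
    exact hveq.symm
  have hl2 : ∑ i ∈ t, l i ^ 2 ≤ D t * ‖v‖ ^ 2 := by
    have := hDb t htind (fun i => l i)
    rw [hLv] at this
    rw [← Finset.sum_coe_sort t (fun i => l i ^ 2)]
    exact this
  have hRsub : ∑ i ∈ t, R i ^ 2 ≤ ∑ i, R i ^ 2 :=
    Finset.sum_le_sum_of_subset_of_nonneg (Finset.subset_univ t)
      (fun i _ _ => by positivity)
  have hRsum0 : 0 ≤ ∑ i, R i ^ 2 := Finset.sum_nonneg (fun i _ => by positivity)
  by_cases hv0 : ‖x - p‖ = 0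
  · have hz : ‖x - p‖ ^ 2 = 0 := by rw [hv0]; ring
    rw [hz]
    exact mul_nonneg hCpos.le hRsum0
  · have hv0' : ‖v‖ ≠ 0 := hv0
    have hvpos : 0 < ‖v‖ ^ 2 := by positivity
    have h4 : (‖v‖ ^ 2) ^ 2 ≤ (∑ i ∈ t, l i * R i) ^ 2 := by
      apply pow_le_pow_left₀ (by positivity) hmain
    have h5 : (‖v‖ ^ 2) ^ 2 ≤ (D t * ‖v‖ ^ 2) * ∑ i, R i ^ 2 := by
      calc (‖v‖ ^ 2) ^ 2 ≤ (∑ i ∈ t, l i ^ 2) * ∑ i ∈ t, R i ^ 2 := le_trans h4 hCS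
      _ ≤ (D t * ‖v‖ ^ 2) * ∑ i, R i ^ 2 := by
          apply mul_le_mul hl2 hRsub (Finset.sum_nonneg (fun i _ => by positivity))
          nlinarith [hD0 t]
    have h6 : ‖v‖ ^ 2 ≤ D t * ∑ i, R i ^ 2 := by
      have := mul_le_mul_of_nonneg_right h5 (le_of_lt (inv_pos.mpr hvpos))
      calc ‖v‖ ^ 2 = (‖v‖ ^ 2) ^ 2 * (‖v‖ ^ 2)⁻¹ := by field_simp
      _ ≤ (D t * ‖v‖ ^ 2 * ∑ i, R i ^ 2) * (‖v‖ ^ 2)⁻¹ := this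
      _ = D t * ∑ i, R i ^ 2 := by field_simp
    calc ‖x - p‖ ^ 2 = ‖v‖ ^ 2 := by rw [hvdef]
    _ ≤ D t * ∑ i, R i ^ 2 := h6
    _ ≤ C * ∑ i, R i ^ 2 := mul_le_mul_of_nonneg_right (hDC t) hRsum0


open scoped InnerProductSpace

theorem hinge_sq (r u : ℝ) : (max 0 (r + u)) ^ 2 ≤ (max 0 r + u) ^ 2 := by
  rcases le_or_gt r 0 with h | h
  · rw [max_eq_left h]
    rcases le_or_gt (r + u) 0 with h2 | h2
    · rw [max_eq_left h2]; nlinarith [sq_nonneg (u : ℝ)]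
    · rw [max_eq_right h2.le]; nlinarith
  · rw [max_eq_right h.le]
    rcases le_or_gt (r + u) 0 with h2 | h2
    · rw [max_eq_left h2]; nlinarith [sq_nonneg (r + u)]
    · rw [max_eq_right h2.le]

theorem hinge_mul (r : ℝ) : max 0 r * r = (max 0 r) ^ 2 := by
  rcases le_or_gt r 0 with h | h
  · rw [max_eq_left h]; ring
  · rw [max_eq_right h.le]; ring

theorem hinge_split (d : ℝ) : (max 0 d) ^ 2 + (max 0 (-d)) ^ 2 = d ^ 2 := by
  rcases le_or_gt d 0 with h | h
  · rw [max_eq_left h, max_eq_right (by linarith)]; ring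
  · rw [max_eq_right h.le, max_eq_left (by linarith)]; ring

theorem stmt_17 {m n : ℕ} (a : Fin m → EuclideanSpace ℝ (Fin n)) (y : Fin m → ℝ)
    (F : EuclideanSpace ℝ (Fin n) → ℝ)
    (hF : ∀ x, F x = ∑ i, max 0 (inner ℝ (a i) x - y i) ^ 2)
    (S : Set (EuclideanSpace ℝ (Fin n))) (hS : S = {x | ∀ z, F x ≤ F z})
    (hSne : S.Nonempty)
    (proj : EuclideanSpace ℝ (Fin n) → EuclideanSpace ℝ (Fin n))
    (hproj : ∀ x, proj x ∈ S ∧ ∀ z ∈ S, ‖x - proj x‖ ≤ ‖x - z‖) :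
    ∃ l : ℝ, 0 < l ∧ ∀ x, F x - F (proj x) ≥ l / 2 * ‖x - proj x‖ ^ 2 := by
  classical
  obtain ⟨x₀, hx₀⟩ := hSne
  have hmin : ∀ z, F x₀ ≤ F z := by rw [hS] at hx₀; exact hx₀
  set rr : EuclideanSpace ℝ (Fin n) → Fin m → ℝ := fun z i => ⟪a i, z⟫_ℝ - y i with hrr
  set ts : Fin m → ℝ := fun i => max 0 (rr x₀ i) with hts
  have hts0 : ∀ i, 0 ≤ ts i := fun i => le_max_left _ _
  have hFeq : ∀ x, F x = ∑ i, (max 0 (rr x i)) ^ 2 := by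
    intro x; rw [hF x]
  have hFx₀ : F x₀ = ∑ i, ts i ^ 2 := hFeq x₀
  -- Key 1 : quadratic residual bound
  have key1 : ∀ x, ∑ i, (max 0 (rr x i) - ts i) ^ 2 ≤ F x - F x₀ := by
    intro x
    set c : Fin m → ℝ := fun i => ⟪a i, x - x₀⟫_ℝ with hc
    have hrs : ∀ (s : ℝ) (i : Fin m), rr (x₀ + s • (x - x₀)) i = rr x₀ i + s * c i := by
      intro s i
      simp only [hrr, hc, inner_add_right, real_inner_smul_right]
      ring
    have hrx : ∀ i, rr x i = rr x₀ i + c i := by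
      intro i
      simp only [hrr, hc, inner_sub_right]
      ring
    set K : ℝ := ∑ i, c i ^ 2 with hK
    have hK0 : 0 ≤ K := Finset.sum_nonneg (fun i _ => by positivity)
    set L : ℝ := ∑ i, ts i * c i with hL
    have hslope : ∀ s : ℝ, 0 < s → 0 ≤ 2 * s * L + s ^ 2 * K := by
      intro s hs
      have h1 : F x₀ ≤ F (x₀ + s • (x - x₀)) := hmin _
      have h2 : F (x₀ + s • (x - x₀)) ≤ ∑ i, (ts i + s * c i) ^ 2 := by
        rw [hFeq]
        apply Finset.sum_le_sum
        intro i _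
        rw [hrs s i, hts]
        exact hinge_sq (rr x₀ i) (s * c i)
      have h3 : ∑ i, (ts i + s * c i) ^ 2 = F x₀ + (2 * s * L + s ^ 2 * K) := by
        rw [hFx₀, hL, hK, Finset.mul_sum, Finset.mul_sum, ← Finset.sum_add_distrib,
          ← Finset.sum_add_distrib]
        exact Finset.sum_congr rfl (fun i _ => by ring)
      linarith
    have hL0 : 0 ≤ L := by
      have hK1 : (0:ℝ) < K + 1 := by linarith
      have h5 : ∀ s : ℝ, 0 < s → 0 ≤ 2 * L + s * K := by
        intro s hs
        have := hslope s hs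
        nlinarith
      have h6 : -(2 * L) ≤ 0 := by
        apply le_of_forall_pos_le_add
        intro ε hε
        have hse : (0:ℝ) < ε / (K + 1) := by positivity
        have h7 := h5 _ hse
        have h8 : ε / (K + 1) * K ≤ ε := by
          rw [div_mul_eq_mul_div, div_le_iff₀ hK1]
          nlinarith
        linarith
      linarith
    have htu : ∑ i, ts i ^ 2 + L ≤ ∑ i, ts i * max 0 (rr x i) := by
      have h9 : ∀ i ∈ Finset.univ, ts i ^ 2 + ts i * c i ≤ ts i * max 0 (rr x i) := by
        intro i _
        have h8 : ts i * rr x i ≤ ts i * max 0 (rr x i) :=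
          mul_le_mul_of_nonneg_left (le_max_right _ _) (hts0 i)
        have h10 : ts i * rr x₀ i = ts i ^ 2 := hinge_mul (rr x₀ i)
        have h12 : ts i * rr x i = ts i * rr x₀ i + ts i * c i := by rw [hrx i]; ring
        linarith
      calc ∑ i, ts i ^ 2 + L = ∑ i, (ts i ^ 2 + ts i * c i) := by
            rw [Finset.sum_add_distrib, hL]
      _ ≤ _ := Finset.sum_le_sum h9
    have hexp : ∑ i, (max 0 (rr x i) - ts i) ^ 2 =
        (∑ i, (max 0 (rr x i)) ^ 2) - 2 * (∑ i, ts i * max 0 (rr x i)) + ∑ i, ts i ^ 2 := by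
      rw [Finset.mul_sum, ← Finset.sum_sub_distrib, ← Finset.sum_add_distrib]
      exact Finset.sum_congr rfl (fun i _ => by ring)
    rw [hexp, hFeq x, hFx₀]
    linarith
  -- membership criterion for S
  have hSmem : ∀ z, (∀ i, rr z i ≤ ts i) → z ∈ S := by
    intro z hz
    rw [hS]
    intro w
    have h1 : F z ≤ F x₀ := by
      rw [hFeq z, hFx₀]
      apply Finset.sum_le_sum
      intro i _
      have h2 : max 0 (rr z i) ≤ ts i := max_le (hts0 i) (hz i)
      have h3 : 0 ≤ max 0 (rr z i) := le_max_left _ _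
      nlinarith
    exact le_trans h1 (hmin w)
  -- Hoffman setup in the lifted space
  set φ : (Fin m → ℝ) → (EuclideanSpace ℝ (Fin n)) → WithLp 2 ((EuclideanSpace ℝ (Fin m)) × (EuclideanSpace ℝ (Fin n))) :=
    fun s v => (WithLp.equiv 2 ((EuclideanSpace ℝ (Fin m)) × (EuclideanSpace ℝ (Fin n)))).symm (WithLp.toLp 2 s, v) with hφ
  set AA : (Fin m ⊕ (Fin m ⊕ Fin m)) → WithLp 2 ((EuclideanSpace ℝ (Fin m)) × (EuclideanSpace ℝ (Fin n))) :=
    Sum.elim (fun i => φ (-(EuclideanSpace.single i 1)) (a i))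
      (Sum.elim (fun i => φ (EuclideanSpace.single i 1) 0)
        (fun i => φ (-(EuclideanSpace.single i 1)) 0)) with hAA
  set bb : (Fin m ⊕ (Fin m ⊕ Fin m)) → ℝ :=
    Sum.elim y (Sum.elim ts (fun i => -(ts i))) with hbb
  have hin1 : ∀ (i : Fin m) (q : WithLp 2 ((EuclideanSpace ℝ (Fin m)) × (EuclideanSpace ℝ (Fin n)))),
      ⟪AA (Sum.inl i), q⟫_ℝ = ⟪a i, q.snd⟫_ℝ - q.fst i := by
    intro i q
    show ⟪φ (-(EuclideanSpace.single i 1)) (a i), q⟫_ℝ = _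
    rw [hφ, WithLp.prod_inner_apply]
    simp [EuclideanSpace.inner_single_left, inner_neg_left]
    ring
  have hin3 : ∀ (i : Fin m) (q : WithLp 2 ((EuclideanSpace ℝ (Fin m)) × (EuclideanSpace ℝ (Fin n)))),
      ⟪AA (Sum.inr (Sum.inl i)), q⟫_ℝ = q.fst i := by
    intro i q
    show ⟪φ (EuclideanSpace.single i 1) 0, q⟫_ℝ = _
    rw [hφ, WithLp.prod_inner_apply]
    simp [EuclideanSpace.inner_single_left]
  have hin4 : ∀ (i : Fin m) (q : WithLp 2 ((EuclideanSpace ℝ (Fin m)) × (EuclideanSpace ℝ (Fin n)))),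
      ⟪AA (Sum.inr (Sum.inr i)), q⟫_ℝ = -(q.fst i) := by
    intro i q
    show ⟪φ (-(EuclideanSpace.single i 1)) 0, q⟫_ℝ = _
    rw [hφ, WithLp.prod_inner_apply]
    simp [EuclideanSpace.inner_single_left, inner_neg_left]
  have hφ1 : ∀ (s : Fin m → ℝ) (v : (EuclideanSpace ℝ (Fin n))), (φ s v).fst = WithLp.toLp 2 s := by
    intro s v; rw [hφ]; rfl
  have hφ2 : ∀ (s : Fin m → ℝ) (v : (EuclideanSpace ℝ (Fin n))), (φ s v).snd = v := by
    intro s v; rw [hφ]; rfl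
  have hne : ∃ q : WithLp 2 ((EuclideanSpace ℝ (Fin m)) × (EuclideanSpace ℝ (Fin n))), ∀ k, ⟪AA k, q⟫_ℝ ≤ bb k := by
    refine ⟨φ ts x₀, ?_⟩
    rintro (i | i | i)
    · rw [hin1, hφ1, hφ2]
      show ⟪a i, x₀⟫_ℝ - ts i ≤ y i
      have := le_max_right (0:ℝ) (rr x₀ i)
      rw [hts]
      simp only [hrr] at this ⊢
      linarith [le_max_right (0:ℝ) (⟪a i, x₀⟫_ℝ - y i)]
    · rw [hin3, hφ1]
      exact le_of_eq rfl
    · rw [hin4, hφ1]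
      exact le_of_eq rfl
  obtain ⟨C, hC0, hCb⟩ := hoffman AA bb hne
  refine ⟨2 / C, by positivity, ?_⟩
  intro x
  set u : Fin m → ℝ := fun i => max 0 (rr x i) with hu
  obtain ⟨pp, hfeas, hb⟩ := hCb (φ u x)
  -- the second component of pp lies in S
  have hpt : ∀ i, pp.fst i = ts i := by
    intro i
    have h1 := hfeas (Sum.inr (Sum.inl i))
    have h2 := hfeas (Sum.inr (Sum.inr i))
    rw [hin3] at h1
    rw [hin4] at h2
    show pp.fst i = ts i
    have hb1 : bb (Sum.inr (Sum.inl i)) = ts i := rfl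
    have hb2 : bb (Sum.inr (Sum.inr i)) = -(ts i) := rfl
    rw [hb1] at h1; rw [hb2] at h2
    linarith
  have hpz : pp.snd ∈ S := by
    apply hSmem
    intro i
    have h1 := hfeas (Sum.inl i)
    rw [hin1] at h1
    have hb1 : bb (Sum.inl i) = y i := rfl
    rw [hb1, hpt i] at h1
    simp only [hrr]
    linarith
  -- residual computation
  have hres : ∑ k, (max 0 (⟪AA k, φ u x⟫_ℝ - bb k)) ^ 2 = ∑ i, (u i - ts i) ^ 2 := by
    rw [Fintype.sum_sum_type, Fintype.sum_sum_type]
    have hg1 : ∀ i ∈ Finset.univ,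
        (max 0 (⟪AA (Sum.inl i), φ u x⟫_ℝ - bb (Sum.inl i))) ^ 2 = 0 := by
      intro i _
      rw [hin1, hφ1, hφ2]
      have hb1 : bb (Sum.inl i) = y i := rfl
      rw [hb1]
      have h3 : rr x i ≤ u i := le_max_right _ _
      have h4 : rr x i = ⟪a i, x⟫_ℝ - y i := rfl
      have h5 : max 0 (⟪a i, x⟫_ℝ - u i - y i) = 0 := max_eq_left (by linarith)
      rw [h5]
      ring
    have e3 : ∀ i : Fin m, (max 0 (⟪AA (Sum.inr (Sum.inl i)), φ u x⟫_ℝ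
        - bb (Sum.inr (Sum.inl i)))) ^ 2 = (max 0 (u i - ts i)) ^ 2 := by
      intro i
      rw [hin3, hφ1]
      rfl
    have e4 : ∀ i : Fin m, (max 0 (⟪AA (Sum.inr (Sum.inr i)), φ u x⟫_ℝ
        - bb (Sum.inr (Sum.inr i)))) ^ 2 = (max 0 (-(u i - ts i))) ^ 2 := by
      intro i
      rw [hin4, hφ1]
      have hb2 : bb (Sum.inr (Sum.inr i)) = -(ts i) := rfl
      rw [hb2]
      congr 2
      show -((WithLp.toLp 2 u) i) - -(ts i) = -(u i - ts i)
      ring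
    rw [Finset.sum_eq_zero hg1, zero_add]
    simp only [e3, e4]
    rw [← Finset.sum_add_distrib]
    exact Finset.sum_congr rfl (fun i _ => hinge_split (u i - ts i))
  -- norm comparison
  have hnorm : ‖x - pp.snd‖ ^ 2 ≤ ‖φ u x - pp‖ ^ 2 := by
    have h1 : ‖φ u x - pp‖ ^ 2 = ‖(φ u x).fst - pp.fst‖ ^ 2 + ‖(φ u x).snd - pp.snd‖ ^ 2 := by
      rw [WithLp.prod_norm_sq_eq_of_L2]
      simp
    rw [h1, hφ2]
    have h2 : (0:ℝ) ≤ ‖(φ u x).fst - pp.fst‖ ^ 2 := sq_nonneg _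
    linarith
  -- conclusion
  obtain ⟨hpS, hpmin⟩ := hproj x
  have hFproj : F (proj x) = F x₀ := by
    apply le_antisymm
    · rw [hS] at hpS; exact hpS x₀
    · exact hmin _
  have h9 : ‖x - proj x‖ ≤ ‖x - pp.snd‖ := hpmin pp.snd hpz
  have h10 : ‖x - proj x‖ ^ 2 ≤ C * (F x - F x₀) := by
    have h11 : ‖x - proj x‖ ^ 2 ≤ ‖x - pp.snd‖ ^ 2 := by
      nlinarith [norm_nonneg (x - proj x), norm_nonneg (x - pp.snd)]
    have h12 := hb
    rw [hres] at h12
    have h13 : ∑ i, (u i - ts i) ^ 2 ≤ F x - F x₀ := key1 x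
    have h14 : C * ∑ i, (u i - ts i) ^ 2 ≤ C * (F x - F x₀) :=
      mul_le_mul_of_nonneg_left h13 hC0.le
    linarith
  rw [ge_iff_le, hFproj]
  have h15 : 2 / C / 2 = 1 / C := by ring
  rw [h15, div_mul_eq_mul_div, one_mul, div_le_iff₀ hC0]
  have h16 : C * (F x - F x₀) = (F x - F x₀) * C := mul_comm _ _
  linarith
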